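/- For every symmetric function π : ℕ → ℕ → Bool and every infinite partition Y of ℕ, there exists an infinite partition X of ℕ coarser than Y such that π is constant on pairs of distinct nonzero elements of Min(X): there is c : Bool with π n m = c for all n, m ∈ Min(X) with n ≠ m, n ≠ 0 and m ≠ 0. (This is the density claim, via Ramsey's theorem, in the proof of the paper's Fact 2.3 that the generic object yields a Ramsey ultrafilter.) -/
import Mathlib


/-- The set of infinite partitions of ℕ, identified with equivalence relations
on ℕ with infinite quotient. -/
abbrev InfPart := {X : Setoid ℕ // Infinite (Quotient X)}

/-- The dual Ellentuck neighborhood `[s,X]_n`: all infinite partitions `Y` such that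
`s` is an `n`-segment of `Y` and `Y` is coarser than `X`. -/
def nbhd (n : ℕ) (s : ℕ → ℕ → Prop) (X : InfPart) : Set InfPart :=
  {Y | (∀ i < n, ∀ j < n, (s i j ↔ Y.1.r i j)) ∧ ∀ a b, X.1.r a b → Y.1.r a b}

/-- The condition for `[s,X]_n` to be a (nonempty-typed) dual Ellentuck neighborhood:
`∀ i j < n, X.r i j → s i j`. -/
def IsNbhd (n : ℕ) (s : ℕ → ℕ → Prop) (X : InfPart) : Prop :=
  ∀ i < n, ∀ j < n, (X.1.r i j → s i j)


/-- A partition Y is coarser than X. -/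
def Coarser (Y X : Setoid ℕ) : Prop := ∀ n m, X.r n m → Y.r n m

/-- Min(X): the set of least elements of the blocks of X. -/
def MinSet (X : Setoid ℕ) : Set ℕ := {k | ∀ m, X.r k m → k ≤ m}

open Classical

noncomputable def rChain (π : ℕ → ℕ → Bool) (S : Set ℕ) : ℕ → Set ℕ
  | 0 => S
  | n + 1 =>
    let T := rChain π S n
    let a := sInf T
    if ({x | x ∈ T ∧ a < x ∧ π a x = true}).Infinite
      then {x | x ∈ T ∧ a < x ∧ π a x = true}
      else {x | x ∈ T ∧ a < x ∧ π a x = false}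

noncomputable def rA (π : ℕ → ℕ → Bool) (S : Set ℕ) (n : ℕ) : ℕ := sInf (rChain π S n)

noncomputable def rC (π : ℕ → ℕ → Bool) (S : Set ℕ) (n : ℕ) : Bool :=
  decide ({x | x ∈ rChain π S n ∧ rA π S n < x ∧ π (rA π S n) x = true}).Infinite

lemma rChain_succ_subset (π : ℕ → ℕ → Bool) (S : Set ℕ) (n : ℕ) :
    rChain π S (n+1) ⊆ {x | x ∈ rChain π S n ∧ rA π S n < x ∧ π (rA π S n) x = rC π S n} := by
  intro x hx
  rw [rChain] at hx
  split_ifs at hx with h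
  · exact ⟨hx.1, hx.2.1, by rw [rA, hx.2.2, rC]; exact (decide_eq_true h).symm⟩
  · exact ⟨hx.1, hx.2.1, by rw [rA, hx.2.2, rC]; exact (decide_eq_false h).symm⟩

lemma rChain_infinite (π : ℕ → ℕ → Bool) (S : Set ℕ) (hS : S.Infinite) (n : ℕ) :
    (rChain π S n).Infinite := by
  induction n with
  | zero => exact hS
  | succ n ih =>
    rw [rChain]
    set T := rChain π S n
    set a := sInf T with ha
    have hbig : ({x | x ∈ T ∧ a < x} : Set ℕ).Infinite := by
      have : ({x | x ∈ T ∧ a < x} : Set ℕ) = T \ {x | x ≤ a} := by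
        ext x; simp [Set.mem_diff, not_le, and_comm]
      rw [this]
      exact ih.diff (Set.finite_le_nat a)
    have hunion : ({x | x ∈ T ∧ a < x} : Set ℕ) =
        {x | x ∈ T ∧ a < x ∧ π a x = true} ∪ {x | x ∈ T ∧ a < x ∧ π a x = false} := by
      ext x
      simp only [Set.mem_setOf_eq, Set.mem_union]
      constructor
      · rintro ⟨h1, h2⟩
        rcases Bool.eq_false_or_eq_true (π a x) with h | h
        · exact Or.inl ⟨h1, h2, h⟩
        · exact Or.inr ⟨h1, h2, h⟩
      · rintro (⟨h1, h2, _⟩ | ⟨h1, h2, _⟩) <;> exact ⟨h1, h2⟩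
    split_ifs with h
    · exact h
    · rw [hunion] at hbig
      rcases Set.infinite_union.mp hbig with h' | h'
      · exact absurd h' h
      · exact h'

lemma rChain_mono (π : ℕ → ℕ → Bool) (S : Set ℕ) {n m : ℕ} (h : n ≤ m) :
    rChain π S m ⊆ rChain π S n := by
  induction m with
  | zero => simp_all
  | succ m ih =>
    rcases Nat.lt_or_ge n (m+1) with h' | h'
    · exact fun x hx => ih (Nat.lt_succ_iff.mp h')
        ((rChain_succ_subset π S m hx).1)
    · have : n = m + 1 := le_antisymm h h'
      subst this; exact fun x hx => hx

lemma rA_mem (π : ℕ → ℕ → Bool) (S : Set ℕ) (hS : S.Infinite) (n : ℕ) :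
    rA π S n ∈ rChain π S n :=
  Nat.sInf_mem (rChain_infinite π S hS n).nonempty

lemma rA_strictMono (π : ℕ → ℕ → Bool) (S : Set ℕ) (hS : S.Infinite) :
    StrictMono (rA π S) := by
  apply strictMono_nat_of_lt_succ
  intro n
  exact (rChain_succ_subset π S n (rA_mem π S hS (n+1))).2.1

lemma rA_homog (π : ℕ → ℕ → Bool) (S : Set ℕ) (hS : S.Infinite) {n m : ℕ} (h : n < m) :
    π (rA π S n) (rA π S m) = rC π S n := by
  have : rA π S m ∈ rChain π S (n+1) :=
    rChain_mono π S h (rA_mem π S hS m)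
  exact (rChain_succ_subset π S n this).2.2

/-- Infinite Ramsey theorem for pairs, 2 colors. -/
theorem ramsey2 (π : ℕ → ℕ → Bool) (hsym : ∀ n m, π n m = π m n)
    (S : Set ℕ) (hS : S.Infinite) :
    ∃ H : Set ℕ, H ⊆ S ∧ H.Infinite ∧ ∃ c : Bool,
      ∀ n ∈ H, ∀ m ∈ H, n ≠ m → π n m = c := by
  have hcover : ({n | rC π S n = true} ∪ {n | rC π S n = false} : Set ℕ) = Set.univ := by
    ext n; simp only [Set.mem_union, Set.mem_setOf_eq, Set.mem_univ, iff_true]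
    rcases Bool.eq_false_or_eq_true (rC π S n) with h | h
    · exact Or.inl h
    · exact Or.inr h
  have : ({n | rC π S n = true} ∪ {n | rC π S n = false} : Set ℕ).Infinite := by
    rw [hcover]; exact Set.infinite_univ
  obtain ⟨c, hI⟩ : ∃ c : Bool, ({n | rC π S n = c} : Set ℕ).Infinite := by
    rcases Set.infinite_union.mp this with h | h
    · exact ⟨true, h⟩
    · exact ⟨false, h⟩
  refine ⟨rA π S '' {n | rC π S n = c}, ?_, ?_, c, ?_⟩
  · rintro x ⟨n, _, rfl⟩
    exact rChain_mono π S (Nat.zero_le n) (rA_mem π S hS n)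
  · exact hI.image ((rA_strictMono π S hS).injective.injOn)
  · rintro x ⟨n, hn, rfl⟩ y ⟨m, hm, rfl⟩ hne
    rcases Nat.lt_trichotomy n m with h | h | h
    · rw [rA_homog π S hS h]; exact hn
    · exact absurd (congrArg (rA π S) h) hne
    · rw [hsym, rA_homog π S hS h]; exact hm


/-- For every symmetric 2-coloring π and infinite partition Y there is an infinite
partition X coarser than Y with π constant on distinct nonzero elements of Min(X). -/
theorem exists_coarser_homogeneous (π : ℕ → ℕ → Bool) (hsym : ∀ n m, π n m = π m n)
    (Y : InfPart) :
    ∃ X : InfPart, Coarser X.1 Y.1 ∧ ∃ c : Bool,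
      ∀ n m, n ∈ MinSet X.1 → m ∈ MinSet X.1 → n ≠ m → n ≠ 0 → m ≠ 0 → π n m = c := by
  classical
  set g : ℕ → ℕ := fun n => sInf {m | Y.1.r n m} with hgdef
  have hgr : ∀ n, Y.1.r n (g n) := fun n => Nat.sInf_mem ⟨n, Y.1.refl n⟩
  have hgle : ∀ n m, Y.1.r n m → g n ≤ m := fun n m h => Nat.sInf_le h
  have hgeq : ∀ n m, Y.1.r n m → g n = g m := by
    intro n m h
    have hs : {k | Y.1.r n k} = {k | Y.1.r m k} := by
      ext k; exact ⟨fun h' => Y.1.trans (Y.1.symm h) h', fun h' => Y.1.trans h h'⟩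
    simp only [hgdef, hs]
  have hgmin : ∀ n, ∀ m, Y.1.r (g n) m → g n ≤ m := by
    intro n m hm
    exact hgle n m (Y.1.trans (hgr n) hm)
  have hgfix : ∀ n, (∀ m, Y.1.r n m → n ≤ m) → g n = n :=
    fun n hn => le_antisymm (hgle n n (Y.1.refl n)) (hn (g n) (hgr n))
  -- the min set of Y is infinite
  haveI := Y.2
  set f : Quotient Y.1 → ℕ := Quotient.lift g (fun a b h => hgeq a b h) with hfdef
  have hfinj : Function.Injective f := by
    intro q1 q2
    induction q1 using Quotient.ind with | _ a =>
    induction q2 using Quotient.ind with | _ b =>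
    intro h
    have h' : g a = g b := h
    exact Quotient.sound (Y.1.trans (hgr a) (h' ▸ Y.1.symm (hgr b)))
  have hMinf : ({n | ∀ m, Y.1.r n m → n ≤ m} : Set ℕ).Infinite :=
    Set.infinite_of_injective_forall_mem hfinj
      (fun q => by induction q using Quotient.ind with | _ a => exact hgmin a)
  have hSinf : (({n | ∀ m, Y.1.r n m → n ≤ m} \ {0}) : Set ℕ).Infinite :=
    hMinf.diff (Set.finite_singleton 0)
  obtain ⟨H, hHS, hHinf, c, hc⟩ := ramsey2 π hsym _ hSinf
  set proj : ℕ → ℕ := fun n => if g n ∈ H then g n else 0 with hprojdef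
  have hprojH : ∀ h ∈ H, proj h = h := by
    intro h hh
    have hmin := (hHS hh).1
    have : g h = h := hgfix h hmin
    simp only [hprojdef, this, if_pos hh]
  have hprojg : ∀ n, proj n = proj (g n) := by
    intro n
    have : g (g n) = g n := (hgeq n (g n) (hgr n)).symm
    simp only [hprojdef, this]
  have hproj0 : proj 0 = 0 := by
    have hg0 : g 0 = 0 := Nat.le_zero.mp (hgle 0 0 (Y.1.refl 0))
    have h0H : (0 : ℕ) ∉ H := fun h => (hHS h).2 rfl
    simp only [hprojdef, hg0, if_neg h0H]
  refine ⟨⟨Setoid.ker proj, ?_⟩, ?_, c, ?_⟩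
  · haveI : Infinite H := Set.infinite_coe_iff.mpr hHinf
    apply Infinite.of_injective (fun h : H => (⟦h.1⟧ : Quotient (Setoid.ker proj)))
    intro h1 h2 heq
    have : proj h1.1 = proj h2.1 := Quotient.exact heq
    rw [hprojH _ h1.2, hprojH _ h2.2] at this
    exact Subtype.ext this
  · intro n m h
    show proj n = proj m
    rw [hprojg n, hprojg m, hgeq n m h]
  · intro n m hn hm hnm hn0 hm0
    -- show n ∈ H and m ∈ H
    have key : ∀ k, k ≠ 0 → (∀ j, (Setoid.ker proj).r k j → k ≤ j) → k ∈ H := by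
      intro k hk0 hk
      have h1 : proj k = proj (g k) := hprojg k
      have h2 : k ≤ g k := hk (g k) h1
      have h3 : g k ≤ k := hgle k k (Y.1.refl k)
      have hkg : g k = k := le_antisymm h3 h2
      by_cases hgk : g k ∈ H
      · rwa [hkg] at hgk
      · exfalso
        have : proj k = 0 := by simp only [hprojdef, if_neg hgk]
        have : (Setoid.ker proj).r k 0 := by
          show proj k = proj 0
          rw [this, hproj0]
        exact hk0 (Nat.le_zero.mp (hk 0 this))
    exact hc n (key n hn0 hn) m (key m hm0 hm) hnm
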